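/- Let R be a ring, δ a derivation of R, and A = R[y; δ]. Let I be an ideal of R generated by a normalizing sequence (x₁, ..., xₙ) such that δ(xᵢ) ∈ Rx₁ + ... + Rxᵢ for all 1 ≤ i ≤ n. Then the ideal AI of A is polynormal, with (x₁, ..., xₙ) a normalizing sequence of generators of AI in A. -/
import Mathlib

/-- `A` is an Ore extension `R[x;σ,δ]` of `R` (via the embedding `ι`):
the defining relation `x·r = σ(r)·x + δ(r)` holds and every element of `A`
is uniquely a left `R`-linear combination of the powers of `x`. -/
def IsOreExtension {R A : Type*} [Ring R] [Ring A] (σ : R →+* R) (δ : R →+ R)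
    (ι : R →+* A) (x : A) : Prop :=
  Function.Injective ι ∧ (∀ r : R, x * ι r = ι (σ r) * x + ι (δ r)) ∧
  ∀ a : A, ∃! c : ℕ →₀ R, a = c.sum fun n r => ι r * x ^ n

/-- `x₁, …, xₙ` is a normalizing sequence: for each `j`, the image of `x j`
in the quotient by the left ideal `S x₁ + ⋯ + S x_{j-1}` is normal
(it generates the same left and right ideal). -/
def IsNormalizingSeq {S : Type*} [Ring S] {n : ℕ} (x : Fin n → S) : Prop :=
  ∀ j : Fin n,
    (∀ s : S, ∃ s' : S, x j * s - s' * x j ∈ Ideal.span {y : S | ∃ i, i < j ∧ y = x i}) ∧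
    (∀ s : S, ∃ s' : S, s * x j - x j * s' ∈ Ideal.span {y : S | ∃ i, i < j ∧ y = x i})

section Aux
variable {R A : Type*} [Ring R] [Ring A] (ι : R →+* A) {n : ℕ} (x : Fin n → R)

/-- The left ideal of `A` generated by the `ι (x i)` for `i < j`. -/
def auxJ (j : Fin n) : Ideal A := Ideal.span {z : A | ∃ i, i < j ∧ z = ι (x i)}

lemma aux_hι (j : Fin n) {z : R}
    (hz : z ∈ Ideal.span {z : R | ∃ i, i < j ∧ z = x i}) : ι z ∈ auxJ ι x j := by
  have h := Ideal.mem_map_of_mem ι hz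
  rw [Ideal.map_span] at h
  refine Ideal.span_mono ?_ h
  rintro _ ⟨w, ⟨i, hi, rfl⟩, rfl⟩
  exact ⟨i, hi, rfl⟩

lemma auxJ_mono {i j : Fin n} (hij : i < j) : auxJ ι x i ≤ auxJ ι x j :=
  Ideal.span_mono (by rintro _ ⟨k, hk, rfl⟩; exact ⟨k, hk.trans hij, rfl⟩)

variable (δ : R →+ R) (y : A)

/-- Splitting off the coefficient of `x j` in `δ (x j)`. -/
lemma aux_split (j : Fin n)
    (hδx : δ (x j) ∈ Ideal.span {z : R | ∃ k, k ≤ j ∧ z = x k}) :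
    ∃ c r : R, c ∈ Ideal.span {z : R | ∃ i, i < j ∧ z = x i} ∧
      δ (x j) = c + r * x j := by
  have hle : Ideal.span {z : R | ∃ k, k ≤ j ∧ z = x k} ≤
      Ideal.span ({z : R | ∃ i, i < j ∧ z = x i} ∪ {x j}) := by
    refine Ideal.span_mono ?_
    rintro _ ⟨k, hk, rfl⟩
    rcases lt_or_eq_of_le hk with h | h
    · exact Or.inl ⟨k, h, rfl⟩
    · exact Or.inr (by simp [h])
  have h := hle hδx
  rw [Ideal.span_union, Submodule.mem_sup] at h
  obtain ⟨c, hc, d, hd, hcd⟩ := h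
  rw [Ideal.span, Submodule.mem_span_singleton] at hd
  obtain ⟨r, hr⟩ := hd
  exact ⟨c, r, hc, by rw [← hcd, ← hr]; rfl⟩

variable (hrel : ∀ r : R, y * ι r = ι r * y + ι (δ r))
    (hdec : ∀ a : A, ∃ c : ℕ →₀ R, a = c.sum fun n r => ι r * y ^ n)
    (hx : IsNormalizingSeq x)
    (hδx : ∀ i : Fin n, δ (x i) ∈ Ideal.span {z : R | ∃ k, k ≤ i ∧ z = x k})

include hrel hdec hx hδx in
lemma aux_L1 : ∀ j : Fin n, ∀ s : A, ∃ s' : A,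
    ι (x j) * s - s' * ι (x j) ∈ auxJ ι x j := by
  have main : ∀ m : ℕ, ∀ j : Fin n, (j : ℕ) < m → ∀ s : A, ∃ s' : A,
      ι (x j) * s - s' * ι (x j) ∈ auxJ ι x j := by
    intro m
    induction m with
    | zero => intro j hj; omega
    | succ m ih =>
      intro j hj s
      have IH : ∀ i : Fin n, i < j → ∀ s : A, ∃ s' : A,
          ι (x i) * s - s' * ι (x i) ∈ auxJ ι x i := by
        intro i hij
        exact ih i (by omega)
      -- `auxJ j` is stable under right multiplication
      have hJ2 : ∀ t : A, ∀ a ∈ auxJ ι x j, a * t ∈ auxJ ι x j := by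
        intro t a ha
        induction ha using Submodule.span_induction with
        | mem z hz =>
          obtain ⟨i, hij, rfl⟩ := hz
          obtain ⟨s', hs'⟩ := IH i hij t
          have h1 : ι (x i) * t - s' * ι (x i) ∈ auxJ ι x j := auxJ_mono ι x hij hs'
          have h2 : s' * ι (x i) ∈ auxJ ι x j :=
            Ideal.mul_mem_left _ _ (Ideal.subset_span ⟨i, hij, rfl⟩)
          simpa using add_mem h1 h2
        | zero => simpa using zero_mem _
        | add a b _ _ pa pb => simpa [add_mul] using add_mem pa pb
        | smul r a _ pa => simpa [smul_eq_mul, mul_assoc] using Submodule.smul_mem _ r pa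
      -- the predicate is closed under products
      have hmulT : ∀ s t : A,
          (∃ s', ι (x j) * s - s' * ι (x j) ∈ auxJ ι x j) →
          (∃ t', ι (x j) * t - t' * ι (x j) ∈ auxJ ι x j) →
          ∃ u, ι (x j) * (s * t) - u * ι (x j) ∈ auxJ ι x j := by
        rintro s t ⟨s', hs⟩ ⟨t', ht⟩
        refine ⟨s' * t', ?_⟩
        have key : ι (x j) * (s * t) - s' * t' * ι (x j) =
            (ι (x j) * s - s' * ι (x j)) * t + s' * (ι (x j) * t - t' * ι (x j)) := by
          noncomm_ring
        rw [key]
        exact add_mem (hJ2 t _ hs) (Ideal.mul_mem_left _ _ ht)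
      -- closed under addition / zero
      have haddT : ∀ s t : A,
          (∃ s', ι (x j) * s - s' * ι (x j) ∈ auxJ ι x j) →
          (∃ t', ι (x j) * t - t' * ι (x j) ∈ auxJ ι x j) →
          ∃ u, ι (x j) * (s + t) - u * ι (x j) ∈ auxJ ι x j := by
        rintro s t ⟨s', hs⟩ ⟨t', ht⟩
        refine ⟨s' + t', ?_⟩
        have key : ι (x j) * (s + t) - (s' + t') * ι (x j) =
            (ι (x j) * s - s' * ι (x j)) + (ι (x j) * t - t' * ι (x j)) := by noncomm_ring
        rw [key]; exact add_mem hs ht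
      -- base case: scalars
      have hbase : ∀ r : R, ∃ s', ι (x j) * ι r - s' * ι (x j) ∈ auxJ ι x j := by
        intro r
        obtain ⟨r', hr'⟩ := (hx j).1 r
        refine ⟨ι r', ?_⟩
        have := aux_hι ι x j hr'
        simpa [map_sub, map_mul] using this
      -- base case: y
      have hy : ∃ s', ι (x j) * y - s' * ι (x j) ∈ auxJ ι x j := by
        obtain ⟨c, r, hc, hcr⟩ := aux_split x δ j (hδx j)
        refine ⟨y - ι r, ?_⟩
        have e1 : y * ι (x j) = ι (x j) * y + ι c + ι r * ι (x j) := by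
          rw [hrel (x j), hcr, map_add, map_mul, ← add_assoc]
        have e2 : ι (x j) * y - (y - ι r) * ι (x j) = -(ι c) := by
          rw [sub_mul, e1]; noncomm_ring
        rw [e2]
        exact neg_mem (aux_hι ι x j hc)
      -- powers of y
      have hpow : ∀ k : ℕ, ∃ s', ι (x j) * y ^ k - s' * ι (x j) ∈ auxJ ι x j := by
        intro k
        induction k with
        | zero => exact ⟨1, by simp⟩
        | succ k ihk =>
          have := hmulT _ _ ihk hy
          simpa [pow_succ] using this
      obtain ⟨c, rfl⟩ := hdec s
      rw [Finsupp.sum]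
      exact Finset.sum_induction _
        (fun a => ∃ s', ι (x j) * a - s' * ι (x j) ∈ auxJ ι x j)
        (fun a b => haddT a b) ⟨0, by simp⟩
        (fun k _ => hmulT _ _ (hbase (c k)) (hpow k))
  intro j
  exact main ((j : ℕ) + 1) j (Nat.lt_succ_self _)

include hrel hdec hx hδx in
lemma aux_L2 : ∀ j : Fin n, ∀ s : A, ∃ s' : A,
    s * ι (x j) - ι (x j) * s' ∈ auxJ ι x j := by
  have L1 := aux_L1 ι x δ y hrel hdec hx hδx
  intro j
  -- two-sidedness of auxJ j, now from L1 globally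
  have hJ2 : ∀ t : A, ∀ a ∈ auxJ ι x j, a * t ∈ auxJ ι x j := by
    intro t a ha
    induction ha using Submodule.span_induction with
    | mem z hz =>
      obtain ⟨i, hij, rfl⟩ := hz
      obtain ⟨s', hs'⟩ := L1 i t
      have h1 : ι (x i) * t - s' * ι (x i) ∈ auxJ ι x j := auxJ_mono ι x hij hs'
      have h2 : s' * ι (x i) ∈ auxJ ι x j :=
        Ideal.mul_mem_left _ _ (Ideal.subset_span ⟨i, hij, rfl⟩)
      simpa using add_mem h1 h2
    | zero => simpa using zero_mem _
    | add a b _ _ pa pb => simpa [add_mul] using add_mem pa pb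
    | smul r a _ pa => simpa [smul_eq_mul, mul_assoc] using Submodule.smul_mem _ r pa
  have hmulT : ∀ s t : A,
      (∃ s', s * ι (x j) - ι (x j) * s' ∈ auxJ ι x j) →
      (∃ t', t * ι (x j) - ι (x j) * t' ∈ auxJ ι x j) →
      ∃ u, s * t * ι (x j) - ι (x j) * u ∈ auxJ ι x j := by
    rintro s t ⟨s', hs⟩ ⟨t', ht⟩
    refine ⟨s' * t', ?_⟩
    have key : s * t * ι (x j) - ι (x j) * (s' * t') =
        s * (t * ι (x j) - ι (x j) * t') + (s * ι (x j) - ι (x j) * s') * t' := by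
      noncomm_ring
    rw [key]
    exact add_mem (Ideal.mul_mem_left _ _ ht) (hJ2 t' _ hs)
  have haddT : ∀ s t : A,
      (∃ s', s * ι (x j) - ι (x j) * s' ∈ auxJ ι x j) →
      (∃ t', t * ι (x j) - ι (x j) * t' ∈ auxJ ι x j) →
      ∃ u, (s + t) * ι (x j) - ι (x j) * u ∈ auxJ ι x j := by
    rintro s t ⟨s', hs⟩ ⟨t', ht⟩
    refine ⟨s' + t', ?_⟩
    have key : (s + t) * ι (x j) - ι (x j) * (s' + t') =
        (s * ι (x j) - ι (x j) * s') + (t * ι (x j) - ι (x j) * t') := by noncomm_ring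
    rw [key]; exact add_mem hs ht
  have hbase : ∀ r : R, ∃ s', ι r * ι (x j) - ι (x j) * s' ∈ auxJ ι x j := by
    intro r
    obtain ⟨r', hr'⟩ := (hx j).2 r
    refine ⟨ι r', ?_⟩
    have := aux_hι ι x j hr'
    simpa [map_sub, map_mul] using this
  have hy : ∃ s', y * ι (x j) - ι (x j) * s' ∈ auxJ ι x j := by
    obtain ⟨c, r, hc, hcr⟩ := aux_split x δ j (hδx j)
    obtain ⟨r'', hr''⟩ := (hx j).2 r
    refine ⟨y + ι r'', ?_⟩
    have e1 : y * ι (x j) = ι (x j) * y + ι c + ι r * ι (x j) := by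
      rw [hrel (x j), hcr, map_add, map_mul, ← add_assoc]
    have e2 : y * ι (x j) - ι (x j) * (y + ι r'') =
        ι c + (ι (r * x j) - ι (x j * r'')) := by
      rw [e1, map_mul, map_mul]; noncomm_ring
    rw [e2]
    refine add_mem (aux_hι ι x j hc) ?_
    have := aux_hι ι x j hr''
    simpa [map_sub] using this
  have hpow : ∀ k : ℕ, ∃ s', y ^ k * ι (x j) - ι (x j) * s' ∈ auxJ ι x j := by
    intro k
    induction k with
    | zero => exact ⟨1, by simp⟩
    | succ k ihk =>
      have := hmulT _ _ ihk hy
      simpa [pow_succ] using this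
  intro s
  obtain ⟨c, rfl⟩ := hdec s
  rw [Finsupp.sum]
  exact Finset.sum_induction _
    (fun a => ∃ s', a * ι (x j) - ι (x j) * s' ∈ auxJ ι x j)
    (fun a b => haddT a b) ⟨0, by simp⟩
    (fun k _ => hmulT _ _ (hbase (c k)) (hpow k))

end Aux

theorem stmt13 (R A : Type*) [Ring R] [Ring A] (δ : R →+ R)
    (hδ : ∀ a b : R, δ (a * b) = a * δ b + δ a * b)
    (ι : R →+* A) (y : A) (hOre : IsOreExtension (RingHom.id R) δ ι y)
    {n : ℕ} (x : Fin n → R) (hx : IsNormalizingSeq x)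
    (hδx : ∀ i : Fin n, δ (x i) ∈ Ideal.span {z : R | ∃ k, k ≤ i ∧ z = x k}) :
    IsNormalizingSeq (fun i => ι (x i)) ∧
      Ideal.map ι (Ideal.span (Set.range x)) =
        Ideal.span (Set.range fun i => ι (x i)) := by
  obtain ⟨hinj, hrel0, hdec0⟩ := hOre
  have hrel : ∀ r : R, y * ι r = ι r * y + ι (δ r) := by
    intro r; simpa using hrel0 r
  have hdec : ∀ a : A, ∃ c : ℕ →₀ R, a = c.sum fun n r => ι r * y ^ n :=
    fun a => (hdec0 a).exists
  constructor
  · intro j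
    exact ⟨aux_L1 ι x δ y hrel hdec hx hδx j, aux_L2 ι x δ y hrel hdec hx hδx j⟩
  · rw [Ideal.map_span, ← Set.range_comp]
    rfl
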